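/- Every simple connected regular matroid of rank at least 1 whose lattice of flats is modular is isomorphic either to the Boolean matroid B_1 (the free matroid on one element) or to the uniform matroid U_{2,3}. -/

import Mathlib

/-! Self-contained definitions: matroid minors, rank, flats, the Möbius function of the
lattice of flats, the characteristic polynomial, the defining axioms of the
(inverse) Kazhdan–Lusztig polynomials of a matroid, and basic structural notions
(circuits, connectivity, simplicity, representability, modularity). -/

open Polynomial Matroid

namespace KL

variable {α : Type} [Fintype α]

/-- The deletion of a set `D` from the matroid `M`. -/
def del (M : Matroid α) (D : Set α) : Matroid α := M ↾ (M.E \ D)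

/-- The contraction of the matroid `M` by the set `C`, defined by duality. -/
def con (M : Matroid α) (C : Set α) : Matroid α := (del M✶ C)✶

/-- The rank of a matroid on a finite ground set: the maximal size of an independent set. -/
noncomputable def rk (M : Matroid α) : ℕ := sSup {n | ∃ I, M.Indep I ∧ I.ncard = n}

/-- The rank of a set `X` in a matroid `M`. -/
noncomputable def rkSet (M : Matroid α) (X : Set α) : ℕ := rk (M ↾ X)

/-- A matroid is loopless if every singleton of its ground set is independent. -/
def Loopless (M : Matroid α) : Prop := ∀ e ∈ M.E, M.Indep {e}

/-- A circuit of a matroid is a minimal dependent set. -/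
def Circuit (M : Matroid α) (C : Set α) : Prop :=
  M.Dep C ∧ ∀ D, M.Dep D → D ⊆ C → D = C

/-- A matroid is connected if its ground set is nonempty and every two distinct
elements of the ground set lie in a common circuit. -/
def Connected (M : Matroid α) : Prop :=
  M.E.Nonempty ∧ ∀ e f, e ∈ M.E → f ∈ M.E → e ≠ f → ∃ C, Circuit M C ∧ e ∈ C ∧ f ∈ C

/-- A matroid is simple if it has no loops and no pair of parallel elements; equivalently,
every subset of the ground set with at most two elements is independent. -/
def Simple (M : Matroid α) : Prop :=
  ∀ I : Set α, I ⊆ M.E → I.ncard ≤ 2 → M.Indep I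

/-- A matroid is representable over a field `𝔽` if there is an assignment of vectors to the
elements of the ground set such that independence coincides with linear independence. -/
def Representable (M : Matroid α) (𝔽 : Type) [Field 𝔽] : Prop :=
  ∃ (n : ℕ) (φ : α → (Fin n → 𝔽)), ∀ I : Set α,
    M.Indep I ↔ (I ⊆ M.E ∧ LinearIndependent 𝔽 (fun x : I => φ x))

/-- A matroid is regular if it is representable over every field. -/
def Regular (M : Matroid α) : Prop := ∀ (𝔽 : Type) (_ : Field 𝔽), Representable M 𝔽

/-- The lattice of flats of `M` is modular: `rk F + rk G = rk (F ∨ G) + rk (F ∧ G)` for all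
flats `F, G`, where the join of two flats is the closure of their union and their meet is
their intersection. -/
def ModularFlats (M : Matroid α) : Prop :=
  ∀ F G : Set α, M.IsFlat F → M.IsFlat G →
    rkSet M F + rkSet M G = rkSet M (M.closure (F ∪ G)) + rkSet M (F ∩ G)

open Classical in
/-- The finset of flats of a matroid on a finite ground set. -/
noncomputable def flats (M : Matroid α) : Finset (Set α) :=
  Finset.univ.filter fun F => M.IsFlat F

open Classical in
/-- The Möbius function of the lattice of flats of `M`, as a function on pairs of sets
(zero when either set is not a flat, and zero on non-ordered pairs of flats). -/
noncomputable def mob (M : Matroid α) (F G : Set α) : ℤ :=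
  letI : LocallyFiniteOrder {X : Set α // M.IsFlat X} := Fintype.toLocallyFiniteOrder
  if hF : M.IsFlat F then
    if hG : M.IsFlat G then
      IncidenceAlgebra.mu ℤ (⟨F, hF⟩ : {X : Set α // M.IsFlat X}) ⟨G, hG⟩
    else 0
  else 0

open Classical in
/-- The doubly-indexed Whitney numbers of the first kind:
`w_{i,j} = Σ μ(F,G)` over pairs of flats `F ⊆ G` with `rk F = i` and `rk G = j`. -/
noncomputable def whitney (M : Matroid α) (i j : ℕ) : ℤ :=
  ∑ F ∈ flats M, ∑ G ∈ flats M,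
    if rkSet M F = i ∧ rkSet M G = j ∧ F ⊆ G then mob M F G else 0

/-- The characteristic polynomial `χ_M(t) = Σ_{F ∈ L(M)} μ(∅,F) t^(r - rk F)`
of a (loopless) matroid. -/
noncomputable def chi (M : Matroid α) : Polynomial ℤ :=
  ∑ F ∈ flats M, C (mob M ∅ F) * X ^ (rk M - rkSet M F)

/-- The defining axioms of the Kazhdan–Lusztig polynomial assignment `M ↦ P_M(t)`:
`P_M = 1` in rank `0`; `deg P_M < r/2` for `r > 0`; and the defining recursion
`t^r P_M(t⁻¹) = Σ_{F ∈ L(M)} χ_{M_F}(t) P_{M^F}(t)`, where `t^r P_M(t⁻¹)` is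
formalized as `reflect r P_M`. -/
def IsKLPolynomial (P : Matroid α → Polynomial ℤ) : Prop :=
  (∀ N : Matroid α, Loopless N → rk N = 0 → P N = 1) ∧
  (∀ N : Matroid α, Loopless N → 0 < rk N → 2 * (P N).natDegree < rk N) ∧
  (∀ N : Matroid α, Loopless N →
    (P N).reflect (rk N) = ∑ F ∈ flats N, chi (N ↾ F) * P (con N F))

/-- The defining axioms of the inverse Kazhdan–Lusztig polynomial assignment `M ↦ Q_M(t)`:
`Q_M = 1` in rank `0`; `deg Q_M < r/2` for `r > 0`; and the defining recursion
`(-1)^r t^r Q_M(t⁻¹) = Σ_{F ∈ L(M)} (-1)^(rk F) Q_{M_F}(t) · t^(r - rk F) χ_{M^F}(t⁻¹)`,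
where `t^k p(t⁻¹)` is formalized as `reflect k p`. -/
def IsInvKLPolynomial (Q : Matroid α → Polynomial ℤ) : Prop :=
  (∀ N : Matroid α, Loopless N → rk N = 0 → Q N = 1) ∧
  (∀ N : Matroid α, Loopless N → 0 < rk N → 2 * (Q N).natDegree < rk N) ∧
  (∀ N : Matroid α, Loopless N →
    (-1 : Polynomial ℤ) ^ (rk N) * (Q N).reflect (rk N) =
      ∑ F ∈ flats N, (-1 : Polynomial ℤ) ^ (rkSet N F) * Q (N ↾ F) *
        (chi (con N F)).reflect (rk N - rkSet N F))

set_option linter.unusedSectionVars false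

lemma flat_closure (M : Matroid α) (X : Set α) : M.IsFlat (M.closure X) := by
  have hne : Nonempty ↑{F | M.IsFlat F ∧ X ∩ M.E ⊆ F} :=
    ⟨⟨M.E, M.ground_isFlat, Set.inter_subset_right⟩⟩
  rw [Matroid.closure_def, Set.sInter_eq_iInter]
  exact Matroid.IsFlat.iInter (fun F => F.2.1)
section RankTool

variable {M : Matroid α} {I B X : Set α}

lemma rk_eq_ncard_of_base (hB : M.IsBase B) : rk M = B.ncard := by
  have hne : {n | ∃ I, M.Indep I ∧ I.ncard = n}.Nonempty := ⟨0, ∅, M.empty_indep, by simp⟩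
  have hbdd : BddAbove {n | ∃ I, M.Indep I ∧ I.ncard = n} := by
    refine ⟨Fintype.card α, ?_⟩
    rintro n ⟨I, hI, rfl⟩
    exact le_trans (Set.ncard_le_ncard (Set.subset_univ I) Set.univ.toFinite)
      (by simp [Set.ncard_univ])
  apply le_antisymm
  · apply csSup_le hne
    rintro n ⟨I, hI, rfl⟩
    obtain ⟨B', hB', hIB'⟩ := hI.exists_isBase_superset
    have h1 : I.ncard ≤ B'.ncard := Set.ncard_le_ncard hIB' B'.toFinite
    rwa [hB'.ncard_eq_ncard_of_isBase hB] at h1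
  · exact le_csSup hbdd ⟨B, hB.indep, rfl⟩

lemma ncard_le_rk (hI : M.Indep I) : I.ncard ≤ rk M := by
  obtain ⟨B, hB, hIB⟩ := hI.exists_isBase_superset
  rw [rk_eq_ncard_of_base hB]
  exact Set.ncard_le_ncard hIB B.toFinite

lemma exists_indep_rk (M : Matroid α) : ∃ I, M.Indep I ∧ I.ncard = rk M := by
  obtain ⟨B, hB⟩ := M.exists_isBase
  exact ⟨B, hB.indep, (rk_eq_ncard_of_base hB).symm⟩

lemma ncard_le_rkSet (hI : M.Indep I) (hIX : I ⊆ X) : I.ncard ≤ rkSet M X :=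
  ncard_le_rk (M := M ↾ X) (Matroid.restrict_indep_iff.2 ⟨hI, hIX⟩)

lemma exists_indep_rkSet (M : Matroid α) (X : Set α) :
    ∃ I, M.Indep I ∧ I ⊆ X ∧ I.ncard = rkSet M X := by
  obtain ⟨I, hI, h⟩ := exists_indep_rk (M ↾ X)
  rw [Matroid.restrict_indep_iff] at hI
  exact ⟨I, hI.1, hI.2, h⟩

lemma rkSet_indep (hX : M.Indep X) : rkSet M X = X.ncard := by
  apply le_antisymm
  · obtain ⟨I, hI, hIX, h⟩ := exists_indep_rkSet M X
    rw [← h]; exact Set.ncard_le_ncard hIX X.toFinite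
  · exact ncard_le_rkSet hX subset_rfl

lemma rkSet_closure_eq (hX : X ⊆ M.E) : rkSet M (M.closure X) = rkSet M X := by
  obtain ⟨B, hB⟩ := (M ↾ X).exists_isBase
  have hBX : M.IsBasis B X := (Matroid.isBase_restrict_iff (by simpa)).1 hB
  have hcl : M.closure B = M.closure X := hBX.closure_eq_closure
  have hB' : (M ↾ M.closure X).IsBase B := by
    apply Matroid.Indep.isBase_of_forall_insert
    · exact Matroid.restrict_indep_iff.2 ⟨hBX.indep,
        hcl ▸ M.subset_closure B hBX.indep.subset_ground⟩
    · rintro e ⟨he, heB⟩ hins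
      rw [Matroid.restrict_ground_eq] at he
      rw [Matroid.restrict_indep_iff] at hins
      have := (hBX.indep.notMem_closure_iff_of_notMem heB
        (M.closure_subset_ground X he)).2 hins.1
      rw [hcl] at this
      exact this he
  rw [rkSet, rkSet, rk_eq_ncard_of_base hB', rk_eq_ncard_of_base hB]

end RankTool
section ThreePoint

variable {M : Matroid α} {C D : Set α}

lemma circuit_ssubset_indep (hC : Circuit M C) (hD : D ⊂ C) : M.Indep D := by
  by_contra h
  exact hD.ne (hC.2 D ⟨h, hD.subset.trans hC.1.2⟩ hD.subset)

lemma simple_indep (hs : Simple M) {x y : α} (hx : x ∈ M.E) (hy : y ∈ M.E) :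
    M.Indep {x, y} := by
  refine hs _ ?_ (Set.ncard_insert_le _ _ |>.trans (by simp))
  simp [Set.insert_subset_iff, hx, hy]

lemma exists_third_point (hs : Simple M) (hc : Connected M) (hmod : ModularFlats M)
    {e f : α} (he : e ∈ M.E) (hf : f ∈ M.E) (hef : e ≠ f) :
    ∃ g, g ∈ M.E ∧ g ≠ e ∧ g ≠ f ∧ ¬ M.Indep {e, f, g} := by
  obtain ⟨C, hC, heC, hfC⟩ := hc.2 e f he hf hef
  have hCE : C ⊆ M.E := hC.1.2
  have hCfin : C.Finite := C.toFinite
  have hpair_sub : ({e, f} : Set α) ⊆ C := by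
    rintro x (rfl | rfl) <;> simpa
  have hpairE : ({e, f} : Set α) ⊆ M.E := hpair_sub.trans hCE
  have hpair_card : ({e, f} : Set α).ncard = 2 := Set.ncard_pair hef
  have hpair_indep : M.Indep {e, f} := simple_indep hs he hf
  -- C has at least 3 elements
  have hCcard : 3 ≤ C.ncard := by
    by_contra h
    exact hC.1.1 (hs C hCE (by omega))
  -- the complementary independent sets
  set K : Set α := C \ {e, f} with hK
  have hKC : K ⊂ C := ⟨Set.diff_subset, fun hsub ↦ (hsub heC).2 (by simp)⟩
  have hKindep : M.Indep K := circuit_ssubset_indep hC hKC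
  have hKcard : K.ncard = C.ncard - 2 := by
    rw [hK, Set.ncard_diff hpair_sub, hpair_card]
  have hunion : ({e, f} : Set α) ∪ K = C := Set.union_diff_cancel hpair_sub
  -- rkSet of C
  have hrkC : rkSet M C = C.ncard - 1 := by
    apply le_antisymm
    · obtain ⟨I, hI, hIC, hcard⟩ := exists_indep_rkSet M C
      have hlt : I ⊂ C := Set.ssubset_iff_subset_ne.2 ⟨hIC, by rintro rfl; exact hC.1.1 hI⟩
      have := Set.ncard_lt_ncard hlt hCfin
      omega
    · have h1 : M.Indep (C \ {f}) := circuit_ssubset_indep hC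
        ⟨Set.diff_subset, fun hsub ↦ (hsub hfC).2 rfl⟩
      have := ncard_le_rkSet h1 Set.diff_subset
      rwa [Set.ncard_diff_singleton_of_mem hfC] at this
  -- apply modularity
  have hmodeq := hmod (M.closure {e, f}) (M.closure K) (flat_closure M _) (flat_closure M _)
  rw [Matroid.closure_union_closure_left_eq, Matroid.closure_union_closure_right_eq,
    hunion] at hmodeq
  rw [rkSet_closure_eq hpairE, rkSet_closure_eq (Set.diff_subset.trans hCE),
    rkSet_closure_eq hCE, rkSet_indep hpair_indep, rkSet_indep hKindep,
    hpair_card, hKcard, hrkC] at hmodeq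
  have hr1 : rkSet M (M.closure {e, f} ∩ M.closure K) = 1 := by omega
  obtain ⟨I, hI, hIsub, hIcard⟩ := exists_indep_rkSet M (M.closure {e, f} ∩ M.closure K)
  rw [hr1, Set.ncard_eq_one] at hIcard
  obtain ⟨g, rfl⟩ := hIcard
  have hgF : g ∈ M.closure {e, f} := (hIsub rfl).1
  have hgK : g ∈ M.closure K := (hIsub rfl).2
  have hgE : g ∈ M.E := M.closure_subset_ground _ (Set.mem_of_mem_of_subset hgF rfl.subset) 
  -- e ∉ closure K and f ∉ closure K
  have heK : e ∉ M.closure K := by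
    have h1 : M.Indep (insert e K) := by
      have : insert e K = C \ {f} := by
        ext x
        simp only [hK, Set.mem_insert_iff, Set.mem_diff, Set.mem_singleton_iff,
          Set.mem_insert_iff]
        constructor
        · rintro (rfl | ⟨hx, hx2⟩)
          · exact ⟨heC, hef⟩
          · exact ⟨hx, fun h ↦ hx2 (Or.inr h)⟩
        · rintro ⟨hx, hxf⟩
          by_cases hxe : x = e
          · exact Or.inl hxe
          · exact Or.inr ⟨hx, by simp [hxe, hxf]⟩
      rw [this]
      exact circuit_ssubset_indep hC ⟨Set.diff_subset, fun hsub ↦ (hsub hfC).2 rfl⟩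
    exact (hKindep.notMem_closure_iff_of_notMem (by simp [hK]) he).2 h1
  have hfK : f ∉ M.closure K := by
    have h1 : M.Indep (insert f K) := by
      have : insert f K = C \ {e} := by
        ext x
        simp only [hK, Set.mem_insert_iff, Set.mem_diff, Set.mem_singleton_iff,
          Set.mem_insert_iff]
        constructor
        · rintro (rfl | ⟨hx, hx2⟩)
          · exact ⟨hfC, hef.symm⟩
          · exact ⟨hx, fun h ↦ hx2 (Or.inl h)⟩
        · rintro ⟨hx, hxe⟩
          by_cases hxf : x = f
          · exact Or.inl hxf
          · exact Or.inr ⟨hx, by simp [hxe, hxf]⟩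
      rw [this]
      exact circuit_ssubset_indep hC ⟨Set.diff_subset, fun hsub ↦ (hsub heC).2 rfl⟩
    exact (hKindep.notMem_closure_iff_of_notMem (by simp [hK]) hf).2 h1
  have hge : g ≠ e := fun h ↦ heK (h ▸ hgK)
  have hgf : g ≠ f := fun h ↦ hfK (h ▸ hgK)
  refine ⟨g, hgE, hge, hgf, fun hind ↦ ?_⟩
  have hsub3 : ({e, f, g} : Set α) ⊆ M.closure {e, f} := by
    rintro x (rfl | rfl | rfl)
    · exact M.subset_closure _ hpairE (by simp)
    · exact M.subset_closure _ hpairE (by simp)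
    · exact hgF
  have h3 : ({e, f, g} : Set α).ncard = 3 := by
    rw [Set.ncard_eq_three]
    exact ⟨e, f, g, hef, hge.symm, hgf.symm, rfl⟩
  have := ncard_le_rkSet hind hsub3
  rw [rkSet_closure_eq hpairE, rkSet_indep hpair_indep, hpair_card, h3] at this
  omega

end ThreePoint
section LinAlg

variable {𝔽 : Type} [Field 𝔽] {V : Type} [AddCommGroup V] [Module 𝔽 V]

omit [Fintype α] in
lemma li_single_iff {a : α} (φ : α → V) :
    LinearIndependent 𝔽 (fun x : ({a} : Set α) => φ x) ↔ φ a ≠ 0 := by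
  rw [show (fun x : ({a} : Set α) => φ x) = fun _ => φ a by
    funext x; rw [show (x : α) = a from x.2]]
  exact linearIndependent_unique_iff

omit [Fintype α] in
lemma li_pair_iff {a b : α} (hab : a ≠ b) (φ : α → V) :
    LinearIndependent 𝔽 (fun x : ({a, b} : Set α) => φ x) ↔
      LinearIndependent 𝔽 ![φ a, φ b] := by
  have hinj : Function.Injective
      (![⟨a, by simp⟩, ⟨b, by simp⟩] : Fin 2 → ({a, b} : Set α)) := by
    intro i j hij; fin_cases i <;> fin_cases j <;> simp_all
  have hsurj : Function.Surjective
      (![⟨a, by simp⟩, ⟨b, by simp⟩] : Fin 2 → ({a, b} : Set α)) := by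
    rintro ⟨x, hx⟩
    rcases hx with rfl | rfl
    exacts [⟨0, rfl⟩, ⟨1, rfl⟩]
  exact (linearIndependent_equiv' (Equiv.ofBijective _ ⟨hinj, hsurj⟩)
    (by funext i; fin_cases i <;> rfl)).symm

omit [Fintype α] in
lemma li_triple_iff {a b c : α} (hab : a ≠ b) (hac : a ≠ c) (hbc : b ≠ c) (φ : α → V) :
    LinearIndependent 𝔽 (fun x : ({a, b, c} : Set α) => φ x) ↔
      LinearIndependent 𝔽 ![φ a, φ b, φ c] := by
  have hinj : Function.Injective
      (![⟨a, by simp⟩, ⟨b, by simp⟩, ⟨c, by simp⟩] : Fin 3 → ({a, b, c} : Set α)) := by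
    intro i j hij; fin_cases i <;> fin_cases j <;> simp_all
  have hsurj : Function.Surjective
      (![⟨a, by simp⟩, ⟨b, by simp⟩, ⟨c, by simp⟩] : Fin 3 → ({a, b, c} : Set α)) := by
    rintro ⟨x, hx⟩
    rcases hx with rfl | rfl | rfl
    exacts [⟨0, rfl⟩, ⟨1, rfl⟩, ⟨2, rfl⟩]
  exact (linearIndependent_equiv' (Equiv.ofBijective _ ⟨hinj, hsurj⟩)
    (by funext i; fin_cases i <;> rfl)).symm

omit [Fintype α] in
lemma li2_coeffs {x y : V} (h : LinearIndependent 𝔽 ![x, y]) {s t : 𝔽}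
    (he : s • x + t • y = 0) : s = 0 ∧ t = 0 :=
  LinearIndependent.pair_iff.1 h s t he

omit [Fintype α] in
lemma li3_zero {x y z : V} (h : LinearIndependent 𝔽 ![x, y, z]) {s t u : 𝔽}
    (he : s • x + t • y + u • z = 0) : s = 0 ∧ t = 0 ∧ u = 0 := by
  have h' := Fintype.linearIndependent_iff.1 h ![s, t, u]
    (by simpa [Fin.sum_univ_three, add_assoc] using he)
  exact ⟨h' 0, h' 1, h' 2⟩

omit [Fintype α] in
lemma li3_coeffs {x y z : V} (h : LinearIndependent 𝔽 ![x, y, z]) {s₁ t₁ u₁ s₂ t₂ u₂ : 𝔽}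
    (he : s₁ • x + t₁ • y + u₁ • z = s₂ • x + t₂ • y + u₂ • z) :
    s₁ = s₂ ∧ t₁ = t₂ ∧ u₁ = u₂ := by
  have h0 : (s₁ - s₂) • x + (t₁ - t₂) • y + (u₁ - u₂) • z = 0 := by
    linear_combination (norm := module) he
  obtain ⟨h1, h2, h3⟩ := li3_zero h h0
  exact ⟨sub_eq_zero.1 h1, sub_eq_zero.1 h2, sub_eq_zero.1 h3⟩

omit [Fintype α] in
lemma li3_not {x y z : V} (h : ¬ LinearIndependent 𝔽 ![x, y, z]) :
    ∃ s t u : 𝔽, s • x + t • y + u • z = 0 ∧ ¬(s = 0 ∧ t = 0 ∧ u = 0) := by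
  obtain ⟨g, hsum, i, hi⟩ := Fintype.not_linearIndependent_iff.1 h
  refine ⟨g 0, g 1, g 2, by simpa [Fin.sum_univ_three, add_assoc] using hsum, ?_⟩
  rintro ⟨h0, h1, h2⟩
  fin_cases i <;> simp_all

omit [Fintype α] in
lemma triple_dep_extract {x y z : V} (h2 : LinearIndependent 𝔽 ![x, y])
    (h3 : ¬ LinearIndependent 𝔽 ![x, y, z]) : ∃ s t : 𝔽, z = s • x + t • y := by
  obtain ⟨s, t, u, hsum, hne⟩ := li3_not h3
  by_cases hu : u = 0
  · subst hu
    rw [zero_smul, add_zero] at hsum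
    obtain ⟨hs, ht⟩ := li2_coeffs h2 hsum
    exact absurd ⟨hs, ht, rfl⟩ hne
  · refine ⟨-(u⁻¹ * s), -(u⁻¹ * t), ?_⟩
    have h1 : z = u⁻¹ • (u • z) := (inv_smul_smul₀ hu z).symm
    have h2' : u • z = -(s • x) - t • y := by
      linear_combination (norm := module) hsum
    rw [h1, h2']
    match_scalars <;> field_simp

omit [Fintype α] in
lemma smul_ne_of_pair {y z : V} (h : LinearIndependent 𝔽 ![y, z]) (t : 𝔽) : z ≠ t • y := by
  intro h'
  obtain ⟨-, h1⟩ := li2_coeffs h (s := -t) (t := 1) (by rw [one_smul, h']; module)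
  exact one_ne_zero h1

end LinAlg
section Rep

variable {𝔽 : Type} [Field 𝔽] {n : ℕ} {M : Matroid α} {φ : α → Fin n → 𝔽}
  (hφ : ∀ I : Set α, M.Indep I ↔ (I ⊆ M.E ∧ LinearIndependent 𝔽 (fun x : I => φ x)))

include hφ

lemma rep_pair (hs : Simple M) {x y : α} (hx : x ∈ M.E) (hy : y ∈ M.E) (hxy : x ≠ y) :
    LinearIndependent 𝔽 ![φ x, φ y] :=
  (li_pair_iff hxy φ).1 ((hφ _).1 (simple_indep hs hx hy)).2

lemma rep_ne (hs : Simple M) {x y : α} (hx : x ∈ M.E) (hy : y ∈ M.E) (hxy : x ≠ y) :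
    φ x ≠ φ y := by
  intro h
  obtain ⟨h1, -⟩ := li2_coeffs (rep_pair hφ hs hx hy hxy) (s := 1) (t := -1)
    (by rw [h]; module)
  exact one_ne_zero h1

lemma rep_indep_triple {x y z : α} (hx : x ∈ M.E) (hy : y ∈ M.E) (hz : z ∈ M.E)
    (hxy : x ≠ y) (hxz : x ≠ z) (hyz : y ≠ z) :
    M.Indep {x, y, z} ↔ LinearIndependent 𝔽 ![φ x, φ y, φ z] := by
  rw [hφ, li_triple_iff hxy hxz hyz φ]
  simp [Set.insert_subset_iff, hx, hy, hz]

lemma rep_extract (hs : Simple M) {x y z : α} (hx : x ∈ M.E) (hy : y ∈ M.E) (hz : z ∈ M.E)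
    (hxy : x ≠ y) (hxz : x ≠ z) (hyz : y ≠ z) (hdep : ¬ M.Indep {x, y, z}) :
    ∃ s t : 𝔽, φ z = s • φ x + t • φ y :=
  triple_dep_extract (rep_pair hφ hs hx hy hxy)
    (fun hli => hdep ((rep_indep_triple hφ hx hy hz hxy hxz hyz).2 hli))

end Rep
section RankThree

lemma rank_ge_three_false (M : Matroid α) (hs : Simple M) (hc : Connected M)
    (hreg : Regular M) (hmod : ModularFlats M) (h3 : 3 ≤ rk M) : False := by
  -- a 3-element independent set
  obtain ⟨I, hI, hIcard⟩ := exists_indep_rk M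
  obtain ⟨T, hTI, hTcard⟩ := Set.exists_subset_card_eq (by omega : 3 ≤ I.ncard)
  obtain ⟨e, f, g, hef, heg, hfg, rfl⟩ := Set.ncard_eq_three.1 hTcard
  have hindep : M.Indep {e, f, g} := hI.subset hTI
  have hsubE := hindep.subset_ground
  have he : e ∈ M.E := hsubE (by simp)
  have hf : f ∈ M.E := hsubE (by simp)
  have hg : g ∈ M.E := hsubE (by simp)
  -- third points for the three pairs
  obtain ⟨d, hdE, hde, hdf, hdep_d⟩ := exists_third_point hs hc hmod he hf hef
  obtain ⟨p, hpE, hpe, hpg, hdep_p⟩ := exists_third_point hs hc hmod he hg heg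
  obtain ⟨q, hqE, hqf, hqg, hdep_q⟩ := exists_third_point hs hc hmod hf hg hfg
  -- the binary representation
  obtain ⟨n2, φ, hφ⟩ := hreg (ZMod 2) inferInstance
  have z2 : ∀ s : ZMod 2, s ≠ 0 → s = 1 := by decide
  have hABC : LinearIndependent (ZMod 2) ![φ e, φ f, φ g] :=
    (rep_indep_triple hφ he hf hg hef heg hfg).1 hindep
  -- φ d = φ e + φ f
  obtain ⟨s1, t1, hd1⟩ := rep_extract hφ hs he hf hdE hef hde.symm hdf.symm hdep_d
  have hs1 : s1 ≠ 0 := fun h =>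
    smul_ne_of_pair (rep_pair hφ hs hf hdE hdf.symm) t1 (by simpa [h] using hd1)
  have ht1 : t1 ≠ 0 := fun h => by
    refine smul_ne_of_pair (rep_pair hφ hs he hdE hde.symm) s1 ?_
    rw [hd1, h, zero_smul, add_zero]
  rw [z2 s1 hs1, z2 t1 ht1, one_smul, one_smul] at hd1
  -- φ p = φ e + φ g
  obtain ⟨s2, t2, hp1⟩ := rep_extract hφ hs he hg hpE heg hpe.symm hpg.symm hdep_p
  have hs2 : s2 ≠ 0 := fun h =>
    smul_ne_of_pair (rep_pair hφ hs hg hpE hpg.symm) t2 (by simpa [h] using hp1)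
  have ht2 : t2 ≠ 0 := fun h => by
    refine smul_ne_of_pair (rep_pair hφ hs he hpE hpe.symm) s2 ?_
    rw [hp1, h, zero_smul, add_zero]
  rw [z2 s2 hs2, z2 t2 ht2, one_smul, one_smul] at hp1
  -- φ q = φ f + φ g
  obtain ⟨s3, t3, hq1⟩ := rep_extract hφ hs hf hg hqE hfg hqf.symm hqg.symm hdep_q
  have hs3 : s3 ≠ 0 := fun h =>
    smul_ne_of_pair (rep_pair hφ hs hg hqE hqg.symm) t3 (by simpa [h] using hq1)
  have ht3 : t3 ≠ 0 := fun h => by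
    refine smul_ne_of_pair (rep_pair hφ hs hf hqE hqf.symm) s3 ?_
    rw [hq1, h, zero_smul, add_zero]
  rw [z2 s3 hs3, z2 t3 ht3, one_smul, one_smul] at hq1
  -- canonical coordinates
  have ce : φ e = (1 : ZMod 2) • φ e + (0 : ZMod 2) • φ f + (0 : ZMod 2) • φ g := by module
  have cf : φ f = (0 : ZMod 2) • φ e + (1 : ZMod 2) • φ f + (0 : ZMod 2) • φ g := by module
  have cg : φ g = (0 : ZMod 2) • φ e + (0 : ZMod 2) • φ f + (1 : ZMod 2) • φ g := by module
  have cd : φ d = (1 : ZMod 2) • φ e + (1 : ZMod 2) • φ f + (0 : ZMod 2) • φ g := by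
    rw [hd1]; module
  have cp : φ p = (1 : ZMod 2) • φ e + (0 : ZMod 2) • φ f + (1 : ZMod 2) • φ g := by
    rw [hp1]; module
  have cq : φ q = (0 : ZMod 2) • φ e + (1 : ZMod 2) • φ f + (1 : ZMod 2) • φ g := by
    rw [hq1]; module
  -- distinctness from coordinates
  have necoord : ∀ {x y : α} {s₁ t₁ u₁ s₂ t₂ u₂ : ZMod 2},
      φ x = s₁ • φ e + t₁ • φ f + u₁ • φ g → φ y = s₂ • φ e + t₂ • φ f + u₂ • φ g →
      ¬(s₁ = s₂ ∧ t₁ = t₂ ∧ u₁ = u₂) → x ≠ y := by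
    intro x y s₁ t₁ u₁ s₂ t₂ u₂ hcx hcy hne h
    subst h
    exact hne (li3_coeffs hABC (hcx.symm.trans hcy))
  have hgd : g ≠ d := necoord cg cd (by decide)
  have hdp : d ≠ p := necoord cd cp (by decide)
  have hdq : d ≠ q := necoord cd cq (by decide)
  have hpq : p ≠ q := necoord cp cq (by decide)
  have heq' : e ≠ q := necoord ce cq (by decide)
  have hfp : f ≠ p := necoord cf cp (by decide)
  -- third point for the pair (g, d)
  obtain ⟨z, hzE, hzg, hzd, hdep_z⟩ := exists_third_point hs hc hmod hg hdE hgd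
  obtain ⟨s4, t4, hz1⟩ := rep_extract hφ hs hg hdE hzE hgd hzg.symm hzd.symm hdep_z
  have hs4 : s4 ≠ 0 := fun h =>
    smul_ne_of_pair (rep_pair hφ hs hdE hzE hzd.symm) t4 (by simpa [h] using hz1)
  have ht4 : t4 ≠ 0 := fun h => by
    refine smul_ne_of_pair (rep_pair hφ hs hg hzE hzg.symm) s4 ?_
    rw [hz1, h, zero_smul, add_zero]
  rw [z2 s4 hs4, z2 t4 ht4, one_smul, one_smul] at hz1
  have cz : φ z = (1 : ZMod 2) • φ e + (1 : ZMod 2) • φ f + (1 : ZMod 2) • φ g := by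
    rw [hz1, hd1]; module
  have hez : e ≠ z := necoord ce cz (by decide)
  have hqz : q ≠ z := necoord cq cz (by decide)
  have hfz : f ≠ z := necoord cf cz (by decide)
  have hpz : p ≠ z := necoord cp cz (by decide)
  -- three more dependencies, detected over GF(2)
  have hdep_eqz : ¬ M.Indep {e, q, z} := by
    intro hind
    have hli := (rep_indep_triple hφ he hqE hzE heq' hez hqz).1 hind
    obtain ⟨h1, -, -⟩ := li3_zero hli (s := 1) (t := 1) (u := 1)
      (by rw [hq1, hz1, hd1]; match_scalars <;> decide)
    exact one_ne_zero h1
  have hdep_fpz : ¬ M.Indep {f, p, z} := by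
    intro hind
    have hli := (rep_indep_triple hφ hf hpE hzE hfp hfz hpz).1 hind
    obtain ⟨h1, -, -⟩ := li3_zero hli (s := 1) (t := 1) (u := 1)
      (by rw [hp1, hz1, hd1]; match_scalars <;> decide)
    exact one_ne_zero h1
  have hdep_dpq : ¬ M.Indep {d, p, q} := by
    intro hind
    have hli := (rep_indep_triple hφ hdE hpE hqE hdp hdq hpq).1 hind
    obtain ⟨h1, -, -⟩ := li3_zero hli (s := 1) (t := 1) (u := 1)
      (by rw [hd1, hp1, hq1]; match_scalars <;> decide)
    exact one_ne_zero h1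
  -- now the rational representation
  obtain ⟨m, ψ, hψ⟩ := hreg ℚ inferInstance
  have habc : LinearIndependent ℚ ![ψ e, ψ f, ψ g] :=
    (rep_indep_triple hψ he hf hg hef heg hfg).1 hindep
  obtain ⟨α₁, α₂, had⟩ := rep_extract hψ hs he hf hdE hef hde.symm hdf.symm hdep_d
  obtain ⟨β₁, β₃, hbp⟩ := rep_extract hψ hs he hg hpE heg hpe.symm hpg.symm hdep_p
  obtain ⟨γ₂, γ₃, hcq⟩ := rep_extract hψ hs hf hg hqE hfg hqf.symm hqg.symm hdep_q
  obtain ⟨sz, tz, hz2⟩ := rep_extract hψ hs hg hdE hzE hgd hzg.symm hzd.symm hdep_z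
  obtain ⟨u, w, hz3⟩ := rep_extract hψ hs he hqE hzE heq' hez hqz hdep_eqz
  obtain ⟨u', w', hz4⟩ := rep_extract hψ hs hf hpE hzE hfp hfz hpz hdep_fpz
  -- nonzero coefficients
  have hα₁ : α₁ ≠ 0 := fun h =>
    smul_ne_of_pair (rep_pair hψ hs hf hdE hdf.symm) α₂ (by simpa [h] using had)
  have hα₂ : α₂ ≠ 0 := fun h => by
    refine smul_ne_of_pair (rep_pair hψ hs he hdE hde.symm) α₁ ?_
    rw [had, h, zero_smul, add_zero]
  have hβ₁ : β₁ ≠ 0 := fun h => by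
    refine smul_ne_of_pair (rep_pair hψ hs hg hpE hpg.symm) β₃ ?_
    rw [hbp, h, zero_smul, zero_add]
  have hβ₃ : β₃ ≠ 0 := fun h => by
    refine smul_ne_of_pair (rep_pair hψ hs he hpE hpe.symm) β₁ ?_
    rw [hbp, h, zero_smul, add_zero]
  have hγ₂ : γ₂ ≠ 0 := fun h => by
    refine smul_ne_of_pair (rep_pair hψ hs hg hqE hqg.symm) γ₃ ?_
    rw [hcq, h, zero_smul, zero_add]
  have hγ₃ : γ₃ ≠ 0 := fun h => by
    refine smul_ne_of_pair (rep_pair hψ hs hf hqE hqf.symm) γ₂ ?_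
    rw [hcq, h, zero_smul, add_zero]
  have htz : tz ≠ 0 := fun h => by
    refine smul_ne_of_pair (rep_pair hψ hs hg hzE hzg.symm) sz ?_
    rw [hz2, h, zero_smul, add_zero]
  -- coordinates of ψ z with respect to ψ e, ψ f, ψ g
  have cz1 : ψ z = (tz * α₁) • ψ e + (tz * α₂) • ψ f + sz • ψ g := by
    rw [hz2, had]; module
  have cz2 : ψ z = u • ψ e + (w * γ₂) • ψ f + (w * γ₃) • ψ g := by
    rw [hz3, hcq]; module
  have cz3 : ψ z = (w' * β₁) • ψ e + u' • ψ f + (w' * β₃) • ψ g := by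
    rw [hz4, hbp]; module
  obtain ⟨-, k1a, k1b⟩ := li3_coeffs habc (cz1.symm.trans cz2)
  obtain ⟨k2a, -, k2b⟩ := li3_coeffs habc (cz1.symm.trans cz3)
  -- the dependency of {d, p, q}
  have hnli : ¬ LinearIndependent ℚ ![ψ d, ψ p, ψ q] := fun hli =>
    hdep_dpq ((rep_indep_triple hψ hdE hpE hqE hdp hdq hpq).2 hli)
  obtain ⟨x, y, w₀, hsum, hne0⟩ := li3_not hnli
  have hexp : (x * α₁ + y * β₁) • ψ e + (x * α₂ + w₀ * γ₂) • ψ f +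
      (y * β₃ + w₀ * γ₃) • ψ g = 0 := by
    rw [had, hbp, hcq] at hsum
    linear_combination (norm := module) hsum
  obtain ⟨e1, e2, e3⟩ := li3_zero habc hexp
  have hx : x ≠ 0 := by
    rintro rfl
    simp only [zero_mul, zero_add] at e1 e2
    exact hne0 ⟨rfl, (mul_eq_zero.1 e1).resolve_right hβ₁,
      (mul_eq_zero.1 e2).resolve_right hγ₂⟩
  have hA : α₁ * β₃ * γ₂ + α₂ * β₁ * γ₃ = 0 := by
    have h0 : x * (α₁ * β₃ * γ₂ + α₂ * β₁ * γ₃) = 0 := by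
      linear_combination (β₃ * γ₂) * e1 + (β₁ * γ₃) * e2 - (β₁ * γ₂) * e3
    exact (mul_eq_zero.1 h0).resolve_left hx
  have hB : tz * (α₁ * β₃ * γ₂) = tz * (α₂ * β₁ * γ₃) := by
    linear_combination (β₃ * γ₂) * k2a - (β₁ * γ₂) * k2b + (β₁ * γ₂) * k1b -
      (β₁ * γ₃) * k1a
  have hB' : α₁ * β₃ * γ₂ = α₂ * β₁ * γ₃ := mul_left_cancel₀ htz hB
  have hzero : α₂ * β₁ * γ₃ = 0 := by linarith
  exact mul_ne_zero (mul_ne_zero hα₂ hβ₁) hγ₃ hzero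

end RankThree
/-- Every simple connected regular matroid of rank at least `1` whose lattice
of flats is modular is isomorphic either to the Boolean matroid `B₁` (the free matroid on
one element) or to the uniform matroid `U_{2,3}` (the rank-2 matroid on a 3-element ground
set in which the independent sets are exactly the subsets of the ground set with at most 2
elements). -/
theorem modular_regular_classification {α : Type} [Fintype α] (M : Matroid α)
    (hs : Simple M) (hc : Connected M) (hreg : Regular M) (hrk : 1 ≤ rk M)
    (hmod : ModularFlats M) :
    (M.E.ncard = 1 ∧ M = Matroid.freeOn M.E) ∨
    (M.E.ncard = 3 ∧ ∀ I : Set α, M.Indep I ↔ I ⊆ M.E ∧ I.ncard ≤ 2) := by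
  rcases Nat.lt_or_ge (rk M) 2 with h2 | h2
  · -- rank 1
    left
    have hrk1 : rk M = 1 := by omega
    obtain ⟨e, he⟩ := hc.1
    have hEe : M.E = {e} := by
      refine Set.eq_singleton_iff_unique_mem.2 ⟨he, fun x hx => ?_⟩
      by_contra hxe
      have := ncard_le_rk (simple_indep hs hx he)
      rw [Set.ncard_pair hxe, hrk1] at this
      omega
    refine ⟨by rw [hEe]; simp, ?_⟩
    rw [Matroid.eq_freeOn_iff]
    exact ⟨rfl, hs M.E subset_rfl (by rw [hEe]; simp)⟩
  rcases Nat.lt_or_ge (rk M) 3 with h3 | h3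
  swap
  · exact (rank_ge_three_false M hs hc hreg hmod h3).elim
  -- rank 2
  right
  have hrk2 : rk M = 2 := by omega
  have hchar : ∀ I : Set α, M.Indep I ↔ I ⊆ M.E ∧ I.ncard ≤ 2 := fun I =>
    ⟨fun h => ⟨h.subset_ground, hrk2 ▸ ncard_le_rk h⟩, fun ⟨h1, h2⟩ => hs I h1 h2⟩
  refine ⟨?_, hchar⟩
  obtain ⟨I, hI, hIc⟩ := exists_indep_rk M
  rw [hrk2] at hIc
  obtain ⟨e, f, hef, rfl⟩ := Set.ncard_eq_two.1 hIc
  have he : e ∈ M.E := hI.subset_ground (by simp)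
  have hf : f ∈ M.E := hI.subset_ground (by simp)
  obtain ⟨g, hgE, hge, hgf, hdep⟩ := exists_third_point hs hc hmod he hf hef
  have hge3 : 3 ≤ M.E.ncard := by
    have hsub : ({e, f, g} : Set α) ⊆ M.E := by
      simp [Set.insert_subset_iff, he, hf, hgE]
    have h3' : ({e, f, g} : Set α).ncard = 3 :=
      Set.ncard_eq_three.2 ⟨e, f, g, hef, hge.symm, hgf.symm, rfl⟩
    rw [← h3']
    exact Set.ncard_le_ncard hsub M.E.toFinite
  obtain ⟨n2, φ, hφ⟩ := hreg (ZMod 2) inferInstance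
  have z2 : ∀ s : ZMod 2, s ≠ 0 → s = 1 := by decide
  have himg : ∀ x ∈ M.E, φ x ∈ ({φ e, φ f, φ e + φ f} : Set (Fin n2 → ZMod 2)) := by
    intro x hx
    by_cases hxe : x = e
    · subst hxe; simp
    by_cases hxf : x = f
    · subst hxf; simp
    have hnind : ¬ M.Indep {e, f, x} := by
      intro h
      have hle := ((hchar _).1 h).2
      have h3' : ({e, f, x} : Set α).ncard = 3 :=
        Set.ncard_eq_three.2 ⟨e, f, x, hef, fun h' => hxe h'.symm, fun h' => hxf h'.symm, rfl⟩
      omega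
    obtain ⟨s, t, hx1⟩ := rep_extract hφ hs he hf hx hef
      (fun h' => hxe h'.symm) (fun h' => hxf h'.symm) hnind
    have hs0 : s ≠ 0 := fun h =>
      smul_ne_of_pair (rep_pair hφ hs hf hx (fun h' => hxf h'.symm)) t
        (by simpa [h] using hx1)
    have ht0 : t ≠ 0 := fun h => by
      refine smul_ne_of_pair (rep_pair hφ hs he hx (fun h' => hxe h'.symm)) s ?_
      rw [hx1, h, zero_smul, add_zero]
    rw [z2 s hs0, z2 t ht0, one_smul, one_smul] at hx1
    simp [hx1]
  have hinj : Set.InjOn φ M.E := fun x hx y hy hxy => by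
    by_contra hne
    exact rep_ne hφ hs hx hy hne hxy
  have hle3 : M.E.ncard ≤ 3 := by
    refine le_trans (Set.ncard_le_ncard_of_injOn φ himg hinj (Set.toFinite _)) ?_
    refine le_trans (Set.ncard_insert_le _ _) ?_
    have := Set.ncard_insert_le (φ f) ({φ e + φ f} : Set (Fin n2 → ZMod 2))
    simp only [Set.ncard_singleton] at this
    omega
  omega

end KL
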